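/- Every relative monad over Set is uniquely strong: if J : A → Set is a functor and (T, η, (-)*) is a J-relative monad on Set, then the maps (-)† : Set(X × J A, T B) → Set(X × T A, T B) defined by f†(x, u) = (fun a => f (x, a))* u give T the structure of a strong J-relative monad, i.e., they are natural in X and satisfy the three strong relative monad laws. -/

import Mathlib

open CategoryTheory

/-- every relative monad over `Set` (here: `Type u`) is strong,
via `f† (x, u) = (fun a => f (x, a))* u`: these maps are natural in the context
`X` and satisfy the three strong relative monad laws (with respect to the
Cartesian structure of `Type u`, whose monoidal unit is `PUnit`). -/
theorem relativeMonad_over_Set_is_strong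
    {A : Type*} [Category A] (J : A ⥤ Type u)
    (T : A → Type u) (η : ∀ a : A, J.obj a ⟶ T a)
    (ext : ∀ {a b : A}, (J.obj a ⟶ T b) → (T a ⟶ T b))
    (law1 : ∀ a : A, ext (η a) = 𝟙 (T a))
    (law2 : ∀ {a b : A} (f : J.obj a ⟶ T b), η a ≫ ext f = f)
    (law3 : ∀ {a b c : A} (f : J.obj a ⟶ T b) (g : J.obj b ⟶ T c),
      ext f ≫ ext g = ext (f ≫ ext g))
    -- `sext` is the induced strong extension `f† (x, u) = (f (x, -))* u`
    (sext : ∀ (X : Type u) (a b : A), (X × J.obj a → T b) → (X × T a → T b))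
    (hsext : ∀ (X : Type u) (a b : A) (f : X × J.obj a → T b) (p : X × T a),
      sext X a b f p = ext (TypeCat.ofHom (fun j => f (p.1, j))) p.2) :
    -- naturality in the context `X`
    (∀ (X X' : Type u) (a b : A) (g : X' → X) (f : X × J.obj a → T b)
        (p : X' × T a),
        sext X a b f (g p.1, p.2) = sext X' a b (fun q => f (g q.1, q.2)) p) ∧
    -- left unit law `(η_A ∘ λ)† = λ`
    (∀ (a : A) (p : PUnit.{u + 1} × T a),
        sext PUnit a a (fun q : PUnit.{u + 1} × J.obj a => η a q.2) p = p.2) ∧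
    -- right unit law `f† ∘ (X × η_A) = f`
    (∀ (X : Type u) (a b : A) (f : X × J.obj a → T b) (x : X) (j : J.obj a),
        sext X a b f (x, η a j) = f (x, j)) ∧
    -- associativity law `g† ∘ (Δ × f†) ∘ α = (g† ∘ (Δ × f) ∘ α)†`
    (∀ (X Y : Type u) (a b c : A) (f : X × J.obj a → T b)
        (g : Y × J.obj b → T c) (p : (Y × X) × T a),
        sext Y b c g (p.1.1, sext X a b f (p.1.2, p.2)) =
          sext (Y × X) a c
            (fun q : (Y × X) × J.obj a => sext Y b c g (q.1.1, f (q.1.2, q.2)))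
            p) := by
  refine ⟨fun X X' a b g f p => by simp [hsext], fun a p => ?_, fun X a b f x j => ?_,
    fun X Y a b c f g p => ?_⟩
  · rw [hsext]
    have := congrArg (fun h : T a ⟶ T a => h p.2) (law1 a)
    simpa using this
  · rw [hsext]
    simpa using congrArg (fun h : J.obj a ⟶ T b => h j) (law2 (a := a) (b := b) (TypeCat.ofHom (fun j => f (x, j))))
  · simp only [hsext]
    have h3 := congrArg (fun h : T a ⟶ T c => h p.2) (law3 (TypeCat.ofHom (fun j => f (p.1.2, j))) (TypeCat.ofHom (fun j => g (p.1.1, j))))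
    exact h3
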